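/- Order the conjugate roots λ_{k,j} (j = 1,…,m_k) of each branch k by the lexicographic order on the sequences (arg(a_α(k,j)) : α ∈ Λ_{P,k}) with arg taking values in [0, 2π), and assume λ_{k,1} is minimal for this order among the roots of branch k. Then for two distinct branches k₁ ≠ k₂: max over i,j of O(λ_{k₁,i}, λ_{k₂,j}) equals O(λ_{k₁,1}, λ_{k₂,1}). -/

import Mathlib

open Complex

/-- The argument of a complex number taken in `[0, 2π)`. -/
noncomputable def arg2pi (z : ℂ) : ℝ :=
  if Complex.arg z < 0 then Complex.arg z + 2 * Real.pi else Complex.arg z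

/-- Lexicographic (strict) order on sequences of reals indexed by exponents. -/
def ArgLexLt (s t : ℕ → ℝ) : Prop :=
  ∃ n, s n < t n ∧ ∀ k < n, s k = t k

lemma arg2pi_eq_imp {z w : ℂ} (h : arg2pi z = arg2pi w) : z.arg = w.arg := by
  unfold arg2pi at h
  have hz1 := Complex.arg_le_pi z; have hz2 := Complex.neg_pi_lt_arg z
  have hw1 := Complex.arg_le_pi w; have hw2 := Complex.neg_pi_lt_arg w
  have hp := Real.pi_pos
  split_ifs at h <;> linarith

lemma eq_of_arg2pi {a Θ : ℂ} (habs : ‖Θ‖ = 1) (p q : ℕ)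
    (h : arg2pi (a * Θ ^ p) = arg2pi (a * Θ ^ q)) : a * Θ ^ p = a * Θ ^ q := by
  apply Complex.ext_norm_arg
  · simp [map_mul, map_pow, habs]
  · exact arg2pi_eq_imp h

lemma pow_reduce {Θ : ℂ} {m n : ℕ} (h : Θ ^ (m * n) = 1) (s : ℕ) :
    Θ ^ ((s + 1) * n) = Θ ^ ((s % m + 1) * n) := by
  have e : (s + 1) * n = m * n * (s / m) + (s % m + 1) * n := by
    conv_lhs => rw [← Nat.div_add_mod s m]
    ring
  rw [e, pow_add, pow_mul, h, one_pow, one_mul]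

lemma star_lemma (Θ : ℂ) (hΘ0 : Θ ≠ 0) (a b : ℕ → ℂ) (mb : ℕ) (hmb : 0 < mb)
    (hub : ∀ n, b n ≠ 0 → Θ ^ (mb * n) = 1) (i j n : ℕ)
    (hij : a n * Θ ^ (i * n) = b n * Θ ^ (j * n)) :
    b n * Θ ^ (((j + i * (mb - 1)) % mb + 1) * n) = a n * Θ ^ (1 * n) := by
  by_cases hb : b n = 0
  · have ha : a n = 0 := by
      have h' := hij; rw [hb, zero_mul] at h'
      exact (mul_eq_zero.mp h').resolve_right (pow_ne_zero _ hΘ0)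
    simp [ha, hb]
  · have h1 := hub n hb
    obtain ⟨c, hc⟩ : ∃ c, mb = c + 1 := ⟨mb - 1, by omega⟩
    have hcc : mb - 1 = c := by omega
    rw [hcc]
    calc b n * Θ ^ (((j + i * c) % mb + 1) * n)
        = b n * Θ ^ ((j + i * c + 1) * n) := by rw [← pow_reduce h1 (j + i * c)]
      _ = (b n * Θ ^ (j * n)) * Θ ^ ((1 + i * c) * n) := by
          rw [mul_assoc, ← pow_add]; congr 2; ring
      _ = (a n * Θ ^ (i * n)) * Θ ^ ((1 + i * c) * n) := by rw [hij]
      _ = (a n * Θ ^ (1 * n)) * (Θ ^ (mb * n)) ^ i := by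
          rw [mul_assoc, mul_assoc, ← pow_add, ← pow_mul, ← pow_add]
          congr 2; rw [hc]; ring
      _ = a n * Θ ^ (1 * n) := by rw [h1, one_pow, mul_one]

/-- Key step: if a conjugate root agrees with the distinguished (lex-minimal)
root before `N` and differs at `N`, its argument at `N` is strictly larger. -/
lemma key_lemma (Θ : ℂ) (habs : ‖Θ‖ = 1) (a : ℕ → ℂ) (m j' : ℕ)
    (hj'1 : 1 ≤ j') (hj'm : j' ≤ m)
    (hmin : ∀ j, 1 ≤ j → j ≤ m →
      ¬ ArgLexLt (fun n => if a n = 0 then 0 else arg2pi (a n * Θ ^ (j * n)))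
        (fun n => if a n = 0 then 0 else arg2pi (a n * Θ ^ (1 * n))))
    (N : ℕ) (hagree : ∀ n, n < N → a n * Θ ^ (j' * n) = a n * Θ ^ (1 * n))
    (hne : a N * Θ ^ (j' * N) ≠ a N * Θ ^ (1 * N)) :
    arg2pi (a N * Θ ^ (1 * N)) < arg2pi (a N * Θ ^ (j' * N)) := by
  have haN : a N ≠ 0 := by
    intro h; exact hne (by rw [h, zero_mul, zero_mul])
  rcases lt_trichotomy (arg2pi (a N * Θ ^ (j' * N))) (arg2pi (a N * Θ ^ (1 * N)))
    with hlt | heq | hgt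
  · exfalso
    apply hmin j' hj'1 hj'm
    refine ⟨N, ?_, ?_⟩
    · simp only [haN, if_false]; exact hlt
    · intro k hk
      by_cases hk0 : a k = 0
      · simp [hk0]
      · simp only [hk0, if_false, hagree k hk]
  · exact absurd (eq_of_arg2pi habs _ _ heq) hne
  · exact hgt

/-- Lemma of the paper.  Two distinct branches `k₁ ≠ k₂` with
Newton–Puiseux roots written over a common exponent denominator `M`
(index `n` ↔ exponent `n/M`, `m_k ∣ M`, supports in `(1/m_k)ℕ`).  The roots of
branch `k` are the conjugates `λ_{k,j}` with coefficient
`a_k(n)·Θ^{jn}` at index `n`, where `Θ = e^{2πi/M}` (this is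
`a_α θ_k^{jαm_k}`, `θ_k = e^{2πi/m_k}`, `α = n/M`).  Order the roots of each
branch lexicographically by the sequences of arguments (in `[0,2π)`) of their
nonzero coefficients, and assume `λ_{k,1}` is minimal for this order.  Then
`max_{i,j} O(λ_{k₁,i}, λ_{k₂,j}) = O(λ_{k₁,1}, λ_{k₂,1})`,
contact orders being measured by the first index where coefficients differ. -/
theorem stmt_3 (M m₁ m₂ : ℕ) (hM : 0 < M) (hm₁ : 0 < m₁) (hm₂ : 0 < m₂)
    (hd₁ : m₁ ∣ M) (hd₂ : m₂ ∣ M)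
    (a₁ a₂ : ℕ → ℂ)
    (hsupp₁ : ∀ n, ¬ (M / m₁ ∣ n) → a₁ n = 0)
    (hsupp₂ : ∀ n, ¬ (M / m₂ ∣ n) → a₂ n = 0)
    (Θ : ℂ) (hΘ : Θ = Complex.exp (2 * Real.pi * Complex.I / M))
    -- the two branches are distinct: every pair of roots differs somewhere
    (hdist : ∀ i j, 1 ≤ i → i ≤ m₁ → 1 ≤ j → j ≤ m₂ →
      ∃ n, a₁ n * Θ ^ (i * n) ≠ a₂ n * Θ ^ (j * n))
    -- `λ_{k,1}` is minimal for the lexicographic order on argument sequences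
    (hmin₁ : ∀ j, 1 ≤ j → j ≤ m₁ →
      ¬ ArgLexLt (fun n => if a₁ n = 0 then 0 else arg2pi (a₁ n * Θ ^ (j * n)))
        (fun n => if a₁ n = 0 then 0 else arg2pi (a₁ n * Θ ^ (1 * n))))
    (hmin₂ : ∀ j, 1 ≤ j → j ≤ m₂ →
      ¬ ArgLexLt (fun n => if a₂ n = 0 then 0 else arg2pi (a₂ n * Θ ^ (j * n)))
        (fun n => if a₂ n = 0 then 0 else arg2pi (a₂ n * Θ ^ (1 * n)))) :
    ∀ i j, 1 ≤ i → i ≤ m₁ → 1 ≤ j → j ≤ m₂ →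
      sInf {n | a₁ n * Θ ^ (i * n) ≠ a₂ n * Θ ^ (j * n)} ≤
        sInf {n | a₁ n * Θ ^ (1 * n) ≠ a₂ n * Θ ^ (1 * n)} := by
  intro i j hi1 him hj1 hjm
  by_contra hcon
  push_neg at hcon
  -- basic facts about Θ
  have hΘ0 : Θ ≠ 0 := by rw [hΘ]; exact Complex.exp_ne_zero _
  have hM0 : (M : ℂ) ≠ 0 := by exact_mod_cast hM.ne'
  have hΘM : Θ ^ M = 1 := by
    rw [hΘ, ← Complex.exp_nat_mul]
    rw [show (M : ℂ) * (2 * Real.pi * Complex.I / M) = 2 * Real.pi * Complex.I by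
      field_simp]
    exact Complex.exp_two_pi_mul_I
  have habsΘ : ‖Θ‖ = 1 := by
    rw [hΘ, Complex.norm_exp]
    have : (2 * (Real.pi : ℂ) * Complex.I / M).re = 0 := by
      rw [show 2 * (Real.pi : ℂ) * Complex.I / M
          = ((2 * Real.pi / M : ℝ) : ℂ) * Complex.I by push_cast; ring]
      simp
    rw [this, Real.exp_zero]
  -- roots of unity on supports
  have hu₁ : ∀ n, a₁ n ≠ 0 → Θ ^ (m₁ * n) = 1 := by
    intro n h
    have hdvd : M / m₁ ∣ n := by
      by_contra hc; exact h (hsupp₁ n hc)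
    obtain ⟨t, ht⟩ := hdvd
    rw [ht, show m₁ * (M / m₁ * t) = M * t by
      rw [← mul_assoc, Nat.mul_div_cancel' hd₁]]
    rw [pow_mul, hΘM, one_pow]
  have hu₂ : ∀ n, a₂ n ≠ 0 → Θ ^ (m₂ * n) = 1 := by
    intro n h
    have hdvd : M / m₂ ∣ n := by
      by_contra hc; exact h (hsupp₂ n hc)
    obtain ⟨t, ht⟩ := hdvd
    rw [ht, show m₂ * (M / m₂ * t) = M * t by
      rw [← mul_assoc, Nat.mul_div_cancel' hd₂]]
    rw [pow_mul, hΘM, one_pow]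
  set N := sInf {n | a₁ n * Θ ^ (1 * n) ≠ a₂ n * Θ ^ (1 * n)} with hN
  have hne11 : {n | a₁ n * Θ ^ (1 * n) ≠ a₂ n * Θ ^ (1 * n)}.Nonempty :=
    hdist 1 1 le_rfl hm₁ le_rfl hm₂
  have hNmem : a₁ N * Θ ^ (1 * N) ≠ a₂ N * Θ ^ (1 * N) := Nat.sInf_mem hne11
  have hEq : ∀ n, n ≤ N → a₁ n * Θ ^ (i * n) = a₂ n * Θ ^ (j * n) := by
    intro n hn
    by_contra h
    have h1 : sInf {n | a₁ n * Θ ^ (i * n) ≠ a₂ n * Θ ^ (j * n)} ≤ n :=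
      Nat.sInf_le h
    omega
  have hpre : ∀ n, n < N → a₁ n = a₂ n := by
    intro n hn
    have h := Nat.notMem_of_lt_sInf (hN ▸ hn)
    simp only [Set.mem_setOf_eq, not_not] at h
    exact mul_right_cancel₀ (pow_ne_zero _ hΘ0) h
  -- the shifted conjugates
  set j' := (j + i * (m₂ - 1)) % m₂ + 1 with hj'
  set i' := (i + j * (m₁ - 1)) % m₁ + 1 with hi'
  have hj'1 : 1 ≤ j' := by omega
  have hj'm : j' ≤ m₂ := by
    have := Nat.mod_lt (j + i * (m₂ - 1)) hm₂; omega
  have hi'1 : 1 ≤ i' := by omega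
  have hi'm : i' ≤ m₁ := by
    have := Nat.mod_lt (i + j * (m₁ - 1)) hm₁; omega
  have hstar₂ : ∀ n, n ≤ N → a₂ n * Θ ^ (j' * n) = a₁ n * Θ ^ (1 * n) :=
    fun n hn => star_lemma Θ hΘ0 a₁ a₂ m₂ hm₂ hu₂ i j n (hEq n hn)
  have hstar₁ : ∀ n, n ≤ N → a₁ n * Θ ^ (i' * n) = a₂ n * Θ ^ (1 * n) :=
    fun n hn => star_lemma Θ hΘ0 a₂ a₁ m₁ hm₁ hu₁ j i n (hEq n hn).symm
  -- apply the key lemma to branch 2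
  have hA : arg2pi (a₂ N * Θ ^ (1 * N)) < arg2pi (a₂ N * Θ ^ (j' * N)) := by
    apply key_lemma Θ habsΘ a₂ m₂ j' hj'1 hj'm hmin₂ N
    · intro n hn
      rw [hstar₂ n (le_of_lt hn), hpre n hn]
    · rw [hstar₂ N le_rfl]
      exact hNmem
  -- apply the key lemma to branch 1
  have hB : arg2pi (a₁ N * Θ ^ (1 * N)) < arg2pi (a₁ N * Θ ^ (i' * N)) := by
    apply key_lemma Θ habsΘ a₁ m₁ i' hi'1 hi'm hmin₁ N
    · intro n hn
      rw [hstar₁ n (le_of_lt hn), ← hpre n hn]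
    · rw [hstar₁ N le_rfl]
      exact fun h => hNmem h.symm
  rw [hstar₂ N le_rfl] at hA
  rw [hstar₁ N le_rfl] at hB
  linarith
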